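/- Under the CA-OCSC recursion, for any erasure sequence {E_t} ⊆ {0,1}, any sequence of source symbols, any sequence of predictive distributions, any target outage level D ∈ (0,1], any ε ∈ (0, D), and any adjustment sequence with δ^tgt_t ≤ D − ε for all t, the parameter sequence satisfies λ_t ≥ −η(1 − ε) for all t ≥ 1. (Lemma 2, CA-OCSC case) -/
import Mathlib


/-- **Lemma 2, CA-OCSC case (parameter lower bound under erasures).**
Under the CA-OCSC recursion (threshold `s t = max 0 (lam t)`, high-probability set
`𝒳_t = {x | p t x ≥ s t}`, update
`lam (t+1) = lam t − η ((1 − E_t) 𝟙{X_t ∉ 𝒳_t} − D + δ^tgt_t)`), for any erasure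
sequence `{E_t} ⊆ {0,1}`, any source symbols, any predictive distributions, any
`D ∈ (0,1]`, any `ε ∈ (0, D)`, and any adjustment sequence with `δ^tgt_t ≤ D − ε`,
the parameter sequence satisfies `lam t ≥ −η (1 − ε)` for all `t ≥ 1`. -/
theorem ca_ocsc_lambda_lower_bound
    {𝒳 : Type*} [Fintype 𝒳] [Nonempty 𝒳]
    (X : ℕ → 𝒳) (p : ℕ → 𝒳 → ℝ)
    (hp0 : ∀ t x, 0 ≤ p t x) (hp1 : ∀ t, ∑ x, p t x = 1)
    (E : ℕ → ℝ) (hE : ∀ t, E t = 0 ∨ E t = 1)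
    (D ε : ℝ) (hD : 0 < D ∧ D ≤ 1) (hε : 0 < ε ∧ ε < D)
    (δtgt : ℕ → ℝ) (hδtgt : ∀ t, 1 ≤ t → δtgt t ≤ D - ε)
    (η : ℝ) (hη : 0 < η)
    (lam₀ : ℝ) (hlam₀ : 0 < lam₀)
    (lam s : ℕ → ℝ) (hinit : lam 1 = lam₀)
    (hs : ∀ t, s t = max 0 (lam t))
    (hupd : ∀ t, 1 ≤ t →
      lam (t + 1) = lam t
        - η * ((1 - E t) * (if p t (X t) < s t then (1 : ℝ) else 0) - D + δtgt t)) :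
    ∀ t, 1 ≤ t → -(η * (1 - ε)) ≤ lam t := by
  have hεlt1 : ε < 1 := lt_of_lt_of_le hε.2 hD.2
  intro t ht
  induction t, ht using Nat.le_induction with
  | base =>
    rw [hinit]
    have : 0 < η * (1 - ε) := mul_pos hη (by linarith)
    linarith
  | succ t ht ih =>
    rw [hupd t ht]
    by_cases hlt : lam t < 0
    · have hs0 : s t = 0 := by rw [hs t]; exact max_eq_left hlt.le
      have hind : (if p t (X t) < s t then (1 : ℝ) else 0) = 0 := by
        rw [hs0]; simp [not_lt.mpr (hp0 t (X t))]
      rw [hind]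
      have hδ := hδtgt t ht
      have h1 : η * ((1 - E t) * 0 - D + δtgt t) ≤ η * (-ε) := by
        apply mul_le_mul_of_nonneg_left _ hη.le
        linarith
      nlinarith
    · push_neg at hlt
      have hδ := hδtgt t ht
      have hind : (1 - E t) * (if p t (X t) < s t then (1 : ℝ) else 0) ≤ 1 := by
        rcases hE t with h | h <;> rw [h] <;> split <;> norm_num
      have h1 : η * ((1 - E t) * (if p t (X t) < s t then (1 : ℝ) else 0) - D + δtgt t)
          ≤ η * (1 - ε) := by
        apply mul_le_mul_of_nonneg_left _ hη.le
        linarith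
      linarith
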